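/- arXiv:1907.10852 — 2 statements merged into one kernel-verified Lean document; each statement's English description precedes it below -/
import Mathlib

section
/- Let K, M, L be symmetric N×N real matrices with M positive definite. Suppose λ̃₀ ∈ ℝ and ũ₀ ∈ ℝᴺ satisfy K·ũ₀ = λ̃₀·M·ũ₀, ũ₀ ≠ 0, and assume the kernel of K - λ̃₀·M is spanned by ũ₀ (simple eigenvalue). Then the (N+1)×(N+1) block linear system [[K - λ̃₀·M, -M·ũ₀],[ũ₀^⊤·M, 0]]·[u̇; λ̇] = [-L·ũ₀; 0] has a unique solution (u̇, λ̇) ∈ ℝᴺ × ℝ. -/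
open Matrix

theorem block_system_unique_solution
    {N : ℕ} (K M L : Matrix (Fin N) (Fin N) ℝ)
    (hK : K.IsSymm) (hMsym : M.IsSymm) (hL : L.IsSymm)
    (hM : M.PosDef)
    (lam₀ : ℝ) (u₀ : Fin N → ℝ) (hu₀ : u₀ ≠ 0)
    (heig : K *ᵥ u₀ = lam₀ • (M *ᵥ u₀))
    (hsimple : ∀ v : Fin N → ℝ, (K - lam₀ • M) *ᵥ v = 0 → ∃ c : ℝ, v = c • u₀) :
    ∃! p : (Fin N → ℝ) × ℝ,
      (K - lam₀ • M) *ᵥ p.1 - p.2 • (M *ᵥ u₀) = -(L *ᵥ u₀) ∧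
      u₀ ⬝ᵥ (M *ᵥ p.1) = 0 := by
  set A : Matrix (Fin N) (Fin N) ℝ := K - lam₀ • M with hA
  have hAsymm : A.IsSymm := by
    unfold Matrix.IsSymm
    rw [hA, transpose_sub, transpose_smul, hK.eq, hMsym.eq]
  have hAu₀ : A *ᵥ u₀ = 0 := by
    rw [hA, sub_mulVec, smul_mulVec, heig, sub_self]
  have hsym : ∀ u v : Fin N → ℝ, u ⬝ᵥ (A *ᵥ v) = (A *ᵥ u) ⬝ᵥ v := by
    intro u v
    rw [dotProduct_mulVec, ← mulVec_transpose, hAsymm.eq]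
  have hMpos : 0 < u₀ ⬝ᵥ (M *ᵥ u₀) := by simpa using hM.dotProduct_mulVec_pos hu₀
  -- the block linear map
  let T : ((Fin N → ℝ) × ℝ) →ₗ[ℝ] ((Fin N → ℝ) × ℝ) :=
    { toFun := fun p => (A *ᵥ p.1 - p.2 • (M *ᵥ u₀), u₀ ⬝ᵥ (M *ᵥ p.1))
      map_add' := by
        intro p q
        simp only [Prod.fst_add, Prod.snd_add, mulVec_add, dotProduct_add, Prod.mk_add_mk,
          Prod.mk.injEq]
        constructor
        · module
        · trivial
      map_smul' := by
        intro c p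
        simp only [Prod.smul_fst, Prod.smul_snd, mulVec_smul, dotProduct_smul, RingHom.id_apply,
          Prod.smul_mk, smul_eq_mul, Prod.mk.injEq]
        constructor
        · module
        · trivial }
  have hTinj : Function.Injective T := by
    rw [injective_iff_map_eq_zero]
    intro p hp
    have h1 : A *ᵥ p.1 - p.2 • (M *ᵥ u₀) = 0 := congrArg Prod.fst hp
    have h2 : u₀ ⬝ᵥ (M *ᵥ p.1) = 0 := congrArg Prod.snd hp
    have h1' : A *ᵥ p.1 = p.2 • (M *ᵥ u₀) := by linear_combination (norm := module) h1
    -- dot with u₀ to get p.2 = 0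
    have hdot : u₀ ⬝ᵥ (A *ᵥ p.1) = p.2 * (u₀ ⬝ᵥ (M *ᵥ u₀)) := by
      rw [h1', dotProduct_smul, smul_eq_mul]
    rw [hsym, hAu₀, zero_dotProduct] at hdot
    have hp2 : p.2 = 0 := by
      rcases mul_eq_zero.mp hdot.symm with h | h
      · exact h
      · exact absurd h hMpos.ne'
    rw [hp2, zero_smul] at h1'
    obtain ⟨c, hc⟩ := hsimple p.1 h1'
    have : c * (u₀ ⬝ᵥ (M *ᵥ u₀)) = 0 := by
      rw [← h2, hc, mulVec_smul, dotProduct_smul, smul_eq_mul]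
    have hc0 : c = 0 := by
      rcases mul_eq_zero.mp this with h | h
      · exact h
      · exact absurd h hMpos.ne'
    have hp1 : p.1 = 0 := by rw [hc, hc0, zero_smul]
    exact Prod.ext hp1 hp2
  have hTsurj : Function.Surjective T := LinearMap.injective_iff_surjective.mp hTinj
  obtain ⟨p, hp⟩ := hTsurj (-(L *ᵥ u₀), 0)
  refine ⟨p, ?_, ?_⟩
  · constructor
    · exact congrArg Prod.fst hp
    · exact congrArg Prod.snd hp
  · intro q hq
    apply hTinj
    rw [hp]
    exact Prod.ext hq.1 hq.2
end

section
/- Let T : Ω → T(Ω) be a volume-preserving C² diffeomorphism and S : Ω → ℝⁿ a C¹ map (the perturbation vector field). Define Ȧ := -((DT)^{-1}·(DS)·(DT)^{-1}·(DT)^{-⊤})^{sym}. Then for all compactly supported C¹ functions f, g : Ω → ℝ: -∫_Ω Ȧ·∇f • ∇g dℓ = ∫_{T(Ω)} (D(S∘T^{-1}))^{sym}·∇(f∘T^{-1}) • ∇(g∘T^{-1}) dℓ. -/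
open Matrix MeasureTheory Topology Filter
open scoped RealInnerProductSpace

variable {n : ℕ}

lemma clm_det (A : Matrix (Fin n) (Fin n) ℝ) :
    (Matrix.toEuclideanCLM (𝕜 := ℝ) A).det = A.det := by
  rw [ContinuousLinearMap.det, Matrix.coe_toEuclideanCLM_eq_toEuclideanLin]
  have h : Matrix.toEuclideanLin (𝕜 := ℝ) A =
      ((WithLp.linearEquiv 2 ℝ (Fin n → ℝ)).symm :
        (Fin n → ℝ) ≃ₗ[ℝ] EuclideanSpace ℝ (Fin n)).toLinearMap ∘ₗ Matrix.toLin' A ∘ₗ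
      (((WithLp.linearEquiv 2 ℝ (Fin n → ℝ)).symm).symm).toLinearMap := rfl
  rw [h, LinearMap.det_conj, LinearMap.det_toLin']

lemma clm_inner_left (A : Matrix (Fin n) (Fin n) ℝ) (u v : EuclideanSpace ℝ (Fin n)) :
    ⟪Matrix.toEuclideanCLM (𝕜 := ℝ) Aᵀ u, v⟫ = ⟪u, Matrix.toEuclideanCLM (𝕜 := ℝ) A v⟫ := by
  have h : Matrix.toEuclideanCLM (𝕜 := ℝ) Aᵀ u
      = LinearMap.adjoint (Matrix.toEuclideanLin (𝕜 := ℝ) A) u := by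
    rw [← Matrix.toEuclideanLin_conjTranspose_eq_adjoint,
      Matrix.conjTranspose_eq_transpose_of_trivial]
    rfl
  rw [h, LinearMap.adjoint_inner_left]
  rfl

lemma clm_inner_right (A : Matrix (Fin n) (Fin n) ℝ) (u v : EuclideanSpace ℝ (Fin n)) :
    ⟪u, Matrix.toEuclideanCLM (𝕜 := ℝ) Aᵀ v⟫ = ⟪Matrix.toEuclideanCLM (𝕜 := ℝ) A u, v⟫ := by
  rw [real_inner_comm, clm_inner_left, real_inner_comm]

lemma continuous_toEuclideanCLM_fun :
    Continuous (fun A : Matrix (Fin n) (Fin n) ℝ => Matrix.toEuclideanCLM (𝕜 := ℝ) A) := by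
  exact LinearMap.continuous_of_finiteDimensional
    (f := { toFun := fun A : Matrix (Fin n) (Fin n) ℝ => Matrix.toEuclideanCLM (𝕜 := ℝ) A,
            map_add' := fun a b => map_add _ a b,
            map_smul' := fun c a => map_smul _ c a })

lemma gradient_comp_clm (f : EuclideanSpace ℝ (Fin n) → ℝ) (hf : ContDiff ℝ 1 f)
    {Tinv : EuclideanSpace ℝ (Fin n) → EuclideanSpace ℝ (Fin n)}
    {y : EuclideanSpace ℝ (Fin n)} (Q : Matrix (Fin n) (Fin n) ℝ)
    (hT : HasFDerivAt Tinv (Matrix.toEuclideanCLM (𝕜 := ℝ) Q) y) :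
    gradient (f ∘ Tinv) y = Matrix.toEuclideanCLM (𝕜 := ℝ) Qᵀ (gradient f (Tinv y)) := by
  have hd : HasFDerivAt (f ∘ Tinv)
      ((fderiv ℝ f (Tinv y)).comp (Matrix.toEuclideanCLM (𝕜 := ℝ) Q)) y :=
    (hf.differentiable one_ne_zero (Tinv y)).hasFDerivAt.comp y hT
  apply ext_inner_right ℝ
  intro w
  rw [gradient, hd.fderiv, InnerProductSpace.toDual_symm_apply, clm_inner_left]
  rw [ContinuousLinearMap.comp_apply, gradient, InnerProductSpace.toDual_symm_apply]

theorem linear_response_matrix_pushforward_form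
    {n : ℕ} (Ω : Set (EuclideanSpace ℝ (Fin n))) (hΩ : IsOpen Ω)
    (T Tinv S : EuclideanSpace ℝ (Fin n) → EuclideanSpace ℝ (Fin n))
    (hTinj : Set.InjOn T Ω) (hTΩ : IsOpen (T '' Ω))
    (hTinv : ∀ x ∈ Ω, Tinv (T x) = x)
    (hTinv' : ∀ y ∈ T '' Ω, T (Tinv y) = y)
    (DT DS : EuclideanSpace ℝ (Fin n) → Matrix (Fin n) (Fin n) ℝ)
    (hDT : ∀ x ∈ Ω, HasFDerivAt T (Matrix.toEuclideanCLM (𝕜 := ℝ) (DT x)) x)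
    (hDS : ∀ x ∈ Ω, HasFDerivAt S (Matrix.toEuclideanCLM (𝕜 := ℝ) (DS x)) x)
    (hDTcont : ContinuousOn DT Ω) (hDScont : ContinuousOn DS Ω)
    (hDTinv : ∀ x ∈ Ω, IsUnit (DT x).det)
    (hvol : ∀ x ∈ Ω, |(DT x).det| = 1)
    (Adot : EuclideanSpace ℝ (Fin n) → Matrix (Fin n) (Fin n) ℝ)
    (hAdot : ∀ x,
      Adot x = -((1 : ℝ) / 2) •
        (((DT x)⁻¹ * DS x * (DT x)⁻¹ * ((DT x)⁻¹)ᵀ) +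
         ((DT x)⁻¹ * DS x * (DT x)⁻¹ * ((DT x)⁻¹)ᵀ)ᵀ))
    (f g : EuclideanSpace ℝ (Fin n) → ℝ)
    (hf : ContDiff ℝ 1 f) (hg : ContDiff ℝ 1 g)
    (hfc : HasCompactSupport f) (hgc : HasCompactSupport g)
    (hfs : tsupport f ⊆ Ω) (hgs : tsupport g ⊆ Ω) :
    -∫ x in Ω, ⟪Matrix.toEuclideanCLM (𝕜 := ℝ) (Adot x) (gradient f x), gradient g x⟫ =
    ∫ y in T '' Ω,
      ⟪Matrix.toEuclideanCLM (𝕜 := ℝ)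
          (((1 : ℝ) / 2) •
            ((DS (Tinv y) * (DT (Tinv y))⁻¹) + (DS (Tinv y) * (DT (Tinv y))⁻¹)ᵀ))
        (gradient (f ∘ Tinv) y), gradient (g ∘ Tinv) y⟫ := by
  classical
  set F : EuclideanSpace ℝ (Fin n) → ℝ := fun y =>
    ⟪Matrix.toEuclideanCLM (𝕜 := ℝ)
        (((1 : ℝ) / 2) •
          ((DS (Tinv y) * (DT (Tinv y))⁻¹) + (DS (Tinv y) * (DT (Tinv y))⁻¹)ᵀ))
      (gradient (f ∘ Tinv) y), gradient (g ∘ Tinv) y⟫ with hF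
  have hTderiv : ∀ x ∈ Ω, HasFDerivWithinAt T (Matrix.toEuclideanCLM (𝕜 := ℝ) (DT x)) Ω x :=
    fun x hx => (hDT x hx).hasFDerivWithinAt
  have key := integral_image_eq_integral_abs_det_fderiv_smul volume hΩ.measurableSet
      hTderiv hTinj F
  rw [key]
  have hpt : ∀ x ∈ Ω,
      |(Matrix.toEuclideanCLM (𝕜 := ℝ) (DT x)).det| • F (T x)
        = -⟪Matrix.toEuclideanCLM (𝕜 := ℝ) (Adot x) (gradient f x), gradient g x⟫ := by
    intro x hx
    set A := DT x with hA
    -- invertibility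
    have hAu := hDTinv x hx
    have h1 : A⁻¹ * A = 1 := Matrix.nonsing_inv_mul A hAu
    have h2 : A * A⁻¹ = 1 := Matrix.mul_nonsing_inv A hAu
    -- continuous linear equiv
    let e : EuclideanSpace ℝ (Fin n) ≃L[ℝ] EuclideanSpace ℝ (Fin n) :=
      ContinuousLinearEquiv.equivOfInverse (Matrix.toEuclideanCLM (𝕜 := ℝ) A)
        (Matrix.toEuclideanCLM (𝕜 := ℝ) A⁻¹)
        (fun v => by
          rw [← ContinuousLinearMap.mul_apply, ← _root_.map_mul, h1, _root_.map_one,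
            ContinuousLinearMap.one_apply])
        (fun v => by
          rw [← ContinuousLinearMap.mul_apply, ← _root_.map_mul, h2, _root_.map_one,
            ContinuousLinearMap.one_apply])
    -- T is C¹ at x
    have hcd : ContDiffAt ℝ 1 T x := by
      have : ContDiffAt ℝ ((0 : ℕ) + 1) T x := by
        rw [contDiffAt_succ_iff_hasFDerivAt]
        refine ⟨fun y => Matrix.toEuclideanCLM (𝕜 := ℝ) (DT y),
          ⟨Ω, hΩ.mem_nhds hx, fun y hy => hDT y hy⟩, ?_⟩
        have h0 : ContDiffAt ℝ 0 (fun y => Matrix.toEuclideanCLM (𝕜 := ℝ) (DT y)) x :=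
          contDiffAt_zero.2 ⟨Ω, hΩ.mem_nhds hx,
            continuous_toEuclideanCLM_fun.comp_continuousOn hDTcont⟩
        exact_mod_cast h0
      simpa using this
    have hstrict : HasStrictFDerivAt T (e : EuclideanSpace ℝ (Fin n) →L[ℝ]
        EuclideanSpace ℝ (Fin n)) x := by
      have h := hcd.hasStrictFDerivAt one_ne_zero
      rwa [(hDT x hx).fderiv] at h
    have hev : ∀ᶠ y in 𝓝 x, Tinv (T y) = y :=
      Filter.eventually_of_mem (hΩ.mem_nhds hx) fun y hy => hTinv y hy
    have hTinvderiv : HasFDerivAt Tinv (Matrix.toEuclideanCLM (𝕜 := ℝ) A⁻¹) (T x) :=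
      (hstrict.to_local_left_inverse hev).hasFDerivAt
    -- gradients
    have hgf := gradient_comp_clm f hf A⁻¹ hTinvderiv
    have hgg := gradient_comp_clm g hg A⁻¹ hTinvderiv
    have hTx : Tinv (T x) = x := hTinv x hx
    rw [hF]
    simp only [hgf, hgg, hTx]
    set u := gradient f x
    set v := gradient g x
    set C := DS x * A⁻¹ with hC
    -- remove determinant
    have hv1 : |A.det| = 1 := by rw [hA]; exact hvol x hx
    rw [clm_det, hv1, one_smul]
    -- move the transpose off v
    rw [clm_inner_right]
    -- collapse compositions
    rw [show ∀ w : EuclideanSpace ℝ (Fin n),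
        Matrix.toEuclideanCLM (𝕜 := ℝ) A⁻¹
          (Matrix.toEuclideanCLM (𝕜 := ℝ) (((1:ℝ)/2) • (C + Cᵀ))
            (Matrix.toEuclideanCLM (𝕜 := ℝ) (A⁻¹)ᵀ w))
          = Matrix.toEuclideanCLM (𝕜 := ℝ) (A⁻¹ * (((1:ℝ)/2) • (C + Cᵀ)) * (A⁻¹)ᵀ) w from
      fun w => by rw [_root_.map_mul, _root_.map_mul, ContinuousLinearMap.mul_apply,
        ContinuousLinearMap.mul_apply]]
    have hmat : A⁻¹ * (((1:ℝ)/2) • (C + Cᵀ)) * (A⁻¹)ᵀ = -(Adot x) := by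
      rw [hAdot, hC, ← hA]
      simp only [Matrix.mul_smul, Matrix.smul_mul, neg_smul, neg_neg]
      congr 1
      simp only [Matrix.mul_add, Matrix.add_mul, transpose_mul, transpose_add,
        transpose_transpose]
      noncomm_ring
    rw [hmat, _root_.map_neg, ContinuousLinearMap.neg_apply, inner_neg_left]
  rw [setIntegral_congr_fun hΩ.measurableSet hpt, integral_neg]
end
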